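/- For every natural number N and every real ε with 0 < ε < e^{-e}, the function z ↦ (log(log(1/|z|)))^N / (|z| · log(1/|z|))² is Lebesgue integrable on the punctured disk {z ∈ ℂ : 0 < |z| < ε}. -/

import Mathlib

open MeasureTheory Set Filter Topology

lemma integrableOn_aux (ε : ℝ) (hε0 : 0 < ε) (hε1 : ε < 1) :
    IntegrableOn (fun r : ℝ => (-Real.log r) ^ (-(3/2) : ℝ) / r) (Set.Ioo 0 ε) := by
  have key : IntegrableOn (fun r : ℝ => (-Real.log r) ^ (-(3/2) : ℝ) / r) (Set.Ioc 0 ε) := by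
    apply intervalIntegral.integrableOn_deriv_of_nonneg
      (g := fun r : ℝ => 2 * (-Real.log r) ^ (-(1/2) : ℝ))
    · -- continuity on Icc 0 ε
      intro x hx
      rcases eq_or_lt_of_le hx.1 with h0 | h0
      · -- x = 0
        subst h0
        have h00 : (2 : ℝ) * (-Real.log 0) ^ (-(1/2) : ℝ) = 0 := by
          rw [Real.log_zero, neg_zero, Real.zero_rpow (by norm_num)]; ring
        rw [ContinuousWithinAt, h00]
        have hlim : Tendsto (fun r : ℝ => 2 * (-Real.log r) ^ (-(1/2) : ℝ)) (𝓝[>] (0:ℝ)) (𝓝 0) := by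
          have h1 : Tendsto (fun r : ℝ => -Real.log r) (𝓝[>] (0:ℝ)) atTop :=
            tendsto_neg_atBot_atTop.comp Real.tendsto_log_nhdsGT_zero
          have h2 := (tendsto_rpow_neg_atTop (by norm_num : (0:ℝ) < 1/2)).comp h1
          simpa [Function.comp_def] using h2.const_mul (2:ℝ)
        have hIci : Tendsto (fun r : ℝ => 2 * (-Real.log r) ^ (-(1/2) : ℝ)) (𝓝[≥] (0:ℝ)) (𝓝 0) := by
          rw [← Set.Ioi_insert, nhdsWithin_insert, tendsto_sup]
          refine ⟨?_, hlim⟩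
          have := tendsto_pure_nhds (fun r : ℝ => 2 * (-Real.log r) ^ (-(1/2) : ℝ)) 0
          rwa [h00] at this
        exact hIci.mono_left (nhdsWithin_mono _ (fun y hy => hy.1))
      · -- x > 0
        apply ContinuousAt.continuousWithinAt
        have hlx : -Real.log x ≠ 0 := by
          have : Real.log x < 0 := Real.log_neg h0 (lt_of_le_of_lt hx.2 hε1)
          linarith
        exact (continuousAt_const.mul
          (((Real.continuousAt_log h0.ne').neg).rpow_const (Or.inl hlx)))
    · -- derivative
      intro x hx
      have hx0 : (0:ℝ) < x := hx.1
      have hlx : 0 < -Real.log x := by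
        have : Real.log x < 0 := Real.log_neg hx0 (lt_trans hx.2 hε1)
        linarith
      have h1 : HasDerivAt (fun r : ℝ => -Real.log r) (-x⁻¹) x :=
        (Real.hasDerivAt_log hx0.ne').neg
      have h2 := (h1.rpow_const (p := (-(1/2) : ℝ)) (Or.inl hlx.ne')).const_mul (2:ℝ)
      convert h2 using 1
      · rfl
      · rfl
      have he : (-(1/2) : ℝ) - 1 = -(3/2) := by norm_num
      rw [he]
      field_simp
    · intro x hx
      have hlx : 0 ≤ -Real.log x := by
        have : Real.log x < 0 := Real.log_neg hx.1 (lt_trans hx.2 hε1)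
        linarith
      exact div_nonneg (Real.rpow_nonneg hlx _) hx.1.le
  exact key.mono_set Ioo_subset_Ioc_self

lemma integrableOn_real (N : ℕ) (ε : ℝ) (hε0 : 0 < ε) (hε : ε < Real.exp (-Real.exp 1)) :
    IntegrableOn
      (fun r : ℝ => (Real.log (Real.log (1 / r))) ^ N / (r * Real.log (1 / r)) ^ 2 * r)
      (Set.Ioo 0 ε) := by
  have hε1 : ε < 1 := lt_trans hε (by
    rw [Real.exp_lt_one_iff]
    exact neg_neg_iff_pos.mpr (Real.exp_pos 1))
  set C : ℝ := (2 * (N:ℝ) + 2) ^ N with hC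
  have hbase : IntegrableOn (fun r : ℝ => C * ((-Real.log r) ^ (-(3/2) : ℝ) / r)) (Set.Ioo 0 ε) :=
    (integrableOn_aux ε hε0 hε1).const_mul C
  refine MeasureTheory.Integrable.mono hbase ?_ ?_
  · exact (Measurable.aestronglyMeasurable (by measurability)).restrict
  · filter_upwards [ae_restrict_mem measurableSet_Ioo] with r hr
    have hr0 : (0:ℝ) < r := hr.1
    have hL : Real.exp 1 < Real.log (1 / r) := by
      rw [Real.lt_log_iff_exp_lt (by positivity)]
      calc Real.exp (Real.exp 1) = 1 / Real.exp (-Real.exp 1) := by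
            rw [Real.exp_neg, one_div, inv_inv]
          _ < 1 / r := by
            apply one_div_lt_one_div_of_lt hr0 (lt_trans hr.2 hε)
    set L := Real.log (1 / r) with hLdef
    have hL0 : (0:ℝ) < L := lt_trans (Real.exp_pos 1) hL
    have hL1 : (1:ℝ) < L := by
      have := Real.add_one_le_exp 1; linarith
    have hlogL0 : 0 ≤ Real.log L := Real.log_nonneg hL1.le
    have hLr : L = -Real.log r := by rw [hLdef, one_div, Real.log_inv]
    -- key pow bound
    have hp : (0:ℝ) < (2 * (N:ℝ) + 2)⁻¹ := by positivity
    have h1 : Real.log L ≤ (2 * (N:ℝ) + 2) * L ^ ((2 * (N:ℝ) + 2)⁻¹) := by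
      have := Real.log_le_rpow_div hL0.le hp
      rwa [div_inv_eq_mul, mul_comm] at this
    have h2 : (Real.log L) ^ N ≤ C * L ^ ((1:ℝ)/2) := by
      calc (Real.log L) ^ N ≤ ((2 * (N:ℝ) + 2) * L ^ ((2 * (N:ℝ) + 2)⁻¹)) ^ N :=
            pow_le_pow_left₀ hlogL0 h1 N
        _ = C * (L ^ ((2 * (N:ℝ) + 2)⁻¹ * N)) := by
            rw [mul_pow, ← Real.rpow_natCast (L ^ ((2 * (N:ℝ) + 2)⁻¹)) N,
              ← Real.rpow_mul hL0.le]
        _ ≤ C * L ^ ((1:ℝ)/2) := by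
            have hCpos : (0:ℝ) ≤ C := by positivity
            apply mul_le_mul_of_nonneg_left _ hCpos
            apply Real.rpow_le_rpow_of_exponent_le hL1.le
            rw [div_eq_mul_inv, one_mul]
            rw [inv_mul_le_iff₀ (by positivity)]
            have : ((2:ℝ) * N + 2) * 2⁻¹ = (N:ℝ) + 1 := by ring
            rw [this]
            linarith [Nat.cast_nonneg (α := ℝ) N]
    -- rewrite RHS
    have hrhs : C * ((-Real.log r) ^ (-(3/2) : ℝ) / r) = C * L ^ ((1:ℝ)/2) / (L ^ 2 * r) := by
      rw [← hLr]
      rw [show (-(3/2) : ℝ) = (1:ℝ)/2 - 2 by norm_num, Real.rpow_sub hL0,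
        Real.rpow_two]
      field_simp
    have hlhs : (Real.log L) ^ N / (r * L) ^ 2 * r = (Real.log L) ^ N / (L ^ 2 * r) := by
      field_simp
    have hb : (Real.log L) ^ N / (r * L) ^ 2 * r ≤ C * ((-Real.log r) ^ (-(3/2) : ℝ) / r) := by
      rw [hrhs, hlhs]
      gcongr
    have hnn : 0 ≤ (Real.log L) ^ N / (r * L) ^ 2 * r := by positivity
    rw [Real.norm_eq_abs, Real.norm_eq_abs, abs_of_nonneg hnn, abs_of_nonneg (by
      have h1 : (0:ℝ) ≤ (-Real.log r) ^ (-(3/2) : ℝ) := Real.rpow_nonneg (by rw [← hLr]; exact hL0.le) _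
      positivity)]
    exact hb

theorem integrableOn_loglog_pow_div_sq (N : ℕ) (ε : ℝ) (hε0 : 0 < ε)
    (hε : ε < Real.exp (-Real.exp 1)) :
    IntegrableOn
      (fun z : ℂ =>
        (Real.log (Real.log (1 / ‖z‖))) ^ N /
          (‖z‖ * Real.log (1 / ‖z‖)) ^ 2)
      {z : ℂ | 0 < ‖z‖ ∧ ‖z‖ < ε} volume := by
  set g : ℝ → ℝ := fun r => (Real.log (Real.log (1 / r))) ^ N / (r * Real.log (1 / r)) ^ 2 with hg
  set G : ℝ → ℝ := (Set.Ioo 0 ε).indicator g with hG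
  -- integrability of G r * r on (0, ∞)
  have hGr : IntegrableOn (fun r : ℝ => G r * r) (Set.Ioi 0) volume := by
    have h1 : Integrable ((Set.Ioo 0 ε).indicator (fun r => g r * r)) volume :=
      (integrable_indicator_iff measurableSet_Ioo).2 (integrableOn_real N ε hε0 hε)
    have h2 : (fun r : ℝ => G r * r) = (Set.Ioo 0 ε).indicator (fun r => g r * r) := by
      funext r
      by_cases hr : r ∈ Set.Ioo (0:ℝ) ε
      · rw [hG, Set.indicator_of_mem hr, Set.indicator_of_mem hr]
      · rw [hG, Set.indicator_of_notMem hr, Set.indicator_of_notMem hr, zero_mul]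
    rw [h2]
    exact h1.integrableOn
  -- integrability w.r.t. volumeIoiPow 1
  have hsub : Integrable (fun r : Set.Ioi (0:ℝ) => G r.1) (Measure.volumeIoiPow 1) := by
    rw [Measure.volumeIoiPow, integrable_withDensity_iff
      ((measurable_subtype_coe.pow_const 1).ennreal_ofReal)
      (Filter.Eventually.of_forall fun x => ENNReal.ofReal_lt_top)]
    have heq : (fun x : Set.Ioi (0:ℝ) => G x.1 * (ENNReal.ofReal (x.1 ^ 1)).toReal)
        = (fun r : ℝ => G r * r) ∘ (Subtype.val : Set.Ioi (0:ℝ) → ℝ) := by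
      funext x
      simp only [Function.comp_apply, pow_one, ENNReal.toReal_ofReal (le_of_lt x.2)]
    rw [heq, ← (MeasurableEmbedding.subtype_coe measurableSet_Ioi).integrable_map_iff,
      map_comap_subtype_coe measurableSet_Ioi]
    exact hGr
  -- product with sphere
  have hprod : Integrable (fun p : Metric.sphere (0:ℂ) 1 × Set.Ioi (0:ℝ) => G p.2.1)
      ((volume : Measure ℂ).toSphere.prod (Measure.volumeIoiPow 1)) := by
    have := (integrable_const (1:ℝ) (μ := (volume : Measure ℂ).toSphere)).mul_prod hsub
    simpa using this
  -- transfer via the polar homeomorphism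
  have hmp := (volume : Measure ℂ).measurePreserving_homeomorphUnitSphereProd
  rw [show Module.finrank ℝ ℂ - 1 = 1 by rw [Complex.finrank_real_complex]] at hmp
  have hcomap : Integrable (fun x : ({0}ᶜ : Set ℂ) => G ‖x.1‖)
      ((volume : Measure ℂ).comap Subtype.val) := by
    have h3 := (hmp.integrable_comp_emb
      (Homeomorph.measurableEmbedding (homeomorphUnitSphereProd ℂ))).2 hprod
    have heq : (fun p : Metric.sphere (0:ℂ) 1 × Set.Ioi (0:ℝ) => G p.2.1)
        ∘ (homeomorphUnitSphereProd ℂ) = fun x : ({0}ᶜ : Set ℂ) => G ‖x.1‖ := by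
      funext x
      simp [homeomorphUnitSphereProd]
    rwa [heq] at h3
  have hfull : Integrable (fun z : ℂ => G ‖z‖) volume := by
    have h2 : IntegrableOn (fun z : ℂ => G ‖z‖) ({(0:ℂ)}ᶜ) volume := by
      rw [IntegrableOn, ← map_comap_subtype_coe (measurableSet_singleton (0:ℂ)).compl,
        (MeasurableEmbedding.subtype_coe (measurableSet_singleton (0:ℂ)).compl).integrable_map_iff]
      exact hcomap
    rwa [IntegrableOn, MeasureTheory.restrict_compl_singleton] at h2
  -- conclude
  have hs : MeasurableSet {z : ℂ | 0 < ‖z‖ ∧ ‖z‖ < ε} := by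
    apply MeasurableSet.inter
    · exact measurableSet_lt measurable_const (continuous_norm.measurable)
    · exact measurableSet_lt (continuous_norm.measurable) measurable_const
  refine (hfull.integrableOn).congr_fun ?_ hs
  intro z hz
  have hmem : ‖z‖ ∈ Set.Ioo (0:ℝ) ε := ⟨hz.1, hz.2⟩
  show G ‖z‖ = _
  rw [hG, Set.indicator_of_mem hmem]
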